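/- Let k be a positive integer, h > 0, ψ > 0, and φ : Fin k → ℝ with 0 ≤ φ_i ≤ h for all i. Set W = k·h − ∑_{i} φ_i (so W ≥ 0). Then ∑_{i} ln(φ_i + ψ) ≥ k·ln h − (W/h)·ln(h/ψ). -/

import Mathlib

lemma stmt10_pointwise (h ψ x : ℝ) (hh : 0 < h) (hψ : 0 < ψ)
    (hx0 : 0 ≤ x) (hxh : x ≤ h) :
    Real.log h - ((h - x) / h) * Real.log (h / ψ) ≤ Real.log (x + ψ) := by
  set t : ℝ := x / h with ht
  have ht0 : 0 ≤ t := div_nonneg hx0 hh.le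
  have ht1 : t ≤ 1 := (div_le_one hh).2 hxh
  have hconc := (strictConcaveOn_log_Ioi.concaveOn).2 (Set.mem_Ioi.2 hh)
    (Set.mem_Ioi.2 hψ) ht0 (by linarith : (0:ℝ) ≤ 1 - t) (by ring)
  have hth : t * h = x := by rw [ht, div_mul_cancel₀ x hh.ne']
  have hle : t * h + (1 - t) * ψ ≤ x + ψ := by
    rw [hth]
    nlinarith
  have hpos : 0 < t * h + (1 - t) * ψ := by
    have hmin : min h ψ ≤ t * h + (1 - t) * ψ := by
      rcases le_total h ψ with hle2 | hle2
      · rw [min_eq_left hle2]; nlinarith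
      · rw [min_eq_right hle2]; nlinarith
    exact (lt_min hh hψ).trans_le hmin
  have hlog : Real.log (t * h + (1 - t) * ψ) ≤ Real.log (x + ψ) :=
    Real.log_le_log hpos hle
  have hdiv : Real.log (h / ψ) = Real.log h - Real.log ψ := Real.log_div hh.ne' hψ.ne'
  have hhx : (h - x) / h = 1 - t := by rw [ht, sub_div, div_self hh.ne']
  calc Real.log h - ((h - x) / h) * Real.log (h / ψ)
      = t * Real.log h + (1 - t) * Real.log ψ := by rw [hdiv, hhx]; ring
    _ ≤ Real.log (t * h + (1 - t) * ψ) := hconc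
    _ ≤ Real.log (x + ψ) := hlog

/-- concavity-of-logarithm bound: for `h, ψ > 0` and `0 ≤ φ_i ≤ h` for all
`i : Fin k`, with `W = k·h − ∑_i φ_i`, one has
`∑_i ln(φ_i + ψ) ≥ k·ln h − (W/h)·ln(h/ψ)`. -/
theorem stmt10 (k : ℕ) (hk : 0 < k)
    (h ψ : ℝ) (hh : 0 < h) (hψ : 0 < ψ)
    (φ : Fin k → ℝ) (hφ : ∀ i, φ i ∈ Set.Icc (0 : ℝ) h) :
    (k : ℝ) * Real.log h - (((k : ℝ) * h - ∑ i, φ i) / h) * Real.log (h / ψ)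
      ≤ ∑ i, Real.log (φ i + ψ) := by
  have key : ∀ i : Fin k, Real.log h - ((h - φ i) / h) * Real.log (h / ψ)
      ≤ Real.log (φ i + ψ) := fun i =>
    stmt10_pointwise h ψ (φ i) hh hψ (hφ i).1 (hφ i).2
  have hsum : ∑ i : Fin k, (Real.log h - ((h - φ i) / h) * Real.log (h / ψ))
      ≤ ∑ i, Real.log (φ i + ψ) := Finset.sum_le_sum (fun i _ => key i)
  calc (k : ℝ) * Real.log h - (((k : ℝ) * h - ∑ i, φ i) / h) * Real.log (h / ψ)
      = ∑ i : Fin k, (Real.log h - ((h - φ i) / h) * Real.log (h / ψ)) := by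
        rw [Finset.sum_sub_distrib, Finset.sum_const, Finset.card_univ, Fintype.card_fin,
          ← Finset.sum_mul, ← Finset.sum_div, Finset.sum_sub_distrib, Finset.sum_const,
          Finset.card_univ, Fintype.card_fin]
        ring_nf
    _ ≤ ∑ i, Real.log (φ i + ψ) := hsum
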